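/- (Proposition 2, transience part) Let H be the fully-packed configuration consisting of all horizontal edges and no vertical edges. For every state s ∈ 𝒮 there exists a vertex w ∈ V with s → (H,w,w); consequently every state s ∈ 𝒮 ∖ ℛ communicates with a state t ∈ ℛ for which t → s fails, so every state of 𝒮 ∖ ℛ is transient. -/

import Mathlib

attribute [local instance] Classical.propDecidable

namespace FPL

/-- Vertices of the brick-wall honeycomb lattice with periodic boundary conditions. -/
abbrev Vtx (m n : ℕ) := ZMod m × ZMod n

/-- Adjacency on the brick-wall honeycomb lattice: horizontal edges between `(i,j)` and
`(i+1,j)`, and vertical edges between `(i,j)` and `(i,j+1)` whenever `i+j` is even. -/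
def HoneyAdj (m n : ℕ) (x y : Vtx m n) : Prop :=
  (x.2 = y.2 ∧ (y.1 = x.1 + 1 ∨ x.1 = y.1 + 1)) ∨
  (x.1 = y.1 ∧ ((y.2 = x.2 + 1 ∧ Even (x.1.val + x.2.val)) ∨
                (x.2 = y.2 + 1 ∧ Even (y.1.val + y.2.val))))

variable (m n : ℕ) [NeZero m] [NeZero n]

/-- The edge set of the brick-wall honeycomb lattice. -/
noncomputable def honeyEdges : Finset (Sym2 (Vtx m n)) :=
  Finset.image (fun p : Vtx m n × Vtx m n => s(p.1, p.2))
    (Finset.univ.filter fun p => HoneyAdj m n p.1 p.2)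

/-- `bdeg m n A x` is the degree of the vertex `x` in the spanning subgraph `(V, A)`. -/
noncomputable def bdeg (A : Finset (Sym2 (Vtx m n))) (x : Vtx m n) : ℕ :=
  (A.filter fun e => x ∈ e).card

/-- `(A,u,v)` is a state of the worm chain: `A ⊆ E`, and the set of odd-degree vertices of
`(V,A)` is `{u,v}` if `u ≠ v`, and is empty if `u = v`. -/
def IsWormState (A : Finset (Sym2 (Vtx m n))) (u v : Vtx m n) : Prop :=
  A ⊆ honeyEdges m n ∧ ∀ x, (Odd (bdeg m n A x) ↔ ((x = u ∨ x = v) ∧ u ≠ v))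

/-- The worm state space `𝒮`. -/
abbrev WormState := {p : Finset (Sym2 (Vtx m n)) × Vtx m n × Vtx m n //
  IsWormState m n p.1 p.2.1 p.2.2}

/-- The set `ℛ` of states with no isolated vertices. -/
def FullSupport (st : WormState m n) : Prop := ∀ x : Vtx m n, bdeg m n st.1.1 x ≠ 0

/-- The fully-packed worm transition matrix `P'_∞`. -/
noncomputable def Pinf : Matrix (WormState m n) (WormState m n) ℝ := fun st tt =>
  if st.1.2.1 = st.1.2.2 then
    (if tt = st then (bdeg m n st.1.1 st.1.2.2 : ℝ) / 3 else 0) +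
    (if ∃ v' : Vtx m n, HoneyAdj m n st.1.2.2 v' ∧ s(st.1.2.2, v') ∉ st.1.1 ∧
        tt.1.1 = insert s(st.1.2.2, v') st.1.1 ∧
        ((tt.1.2.1 = v' ∧ tt.1.2.2 = st.1.2.2) ∨ (tt.1.2.1 = st.1.2.2 ∧ tt.1.2.2 = v'))
      then 1/6 else 0)
  else
    (if bdeg m n st.1.1 st.1.2.1 = 3 ∧ ∃ u' : Vtx m n, HoneyAdj m n st.1.2.1 u' ∧
        s(st.1.2.1, u') ∈ st.1.1 ∧ tt.1.1 = st.1.1.erase s(st.1.2.1, u') ∧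
        tt.1.2.1 = u' ∧ tt.1.2.2 = st.1.2.2 then 1/6 else 0) +
    (if bdeg m n st.1.1 st.1.2.1 = 1 ∧ ∃ u' : Vtx m n, HoneyAdj m n st.1.2.1 u' ∧
        s(st.1.2.1, u') ∉ st.1.1 ∧ tt.1.1 = insert s(st.1.2.1, u') st.1.1 ∧
        tt.1.2.1 = u' ∧ tt.1.2.2 = st.1.2.2 then 1/4 else 0) +
    (if bdeg m n st.1.1 st.1.2.2 = 3 ∧ ∃ v' : Vtx m n, HoneyAdj m n st.1.2.2 v' ∧
        s(st.1.2.2, v') ∈ st.1.1 ∧ tt.1.1 = st.1.1.erase s(st.1.2.2, v') ∧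
        tt.1.2.1 = st.1.2.1 ∧ tt.1.2.2 = v' then 1/6 else 0) +
    (if bdeg m n st.1.1 st.1.2.2 = 1 ∧ ∃ v' : Vtx m n, HoneyAdj m n st.1.2.2 v' ∧
        s(st.1.2.2, v') ∉ st.1.1 ∧ tt.1.1 = insert s(st.1.2.2, v') st.1.1 ∧
        tt.1.2.1 = st.1.2.1 ∧ tt.1.2.2 = v' then 1/4 else 0)

/-- `st → tt`: some power of `P'_∞` has positive `(st,tt)` entry. -/
def Reaches (st tt : WormState m n) : Prop := ∃ k : ℕ, 0 < (Pinf m n ^ k) st tt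

/-- `st ↔ tt`: mutual reachability. -/
def Comm (st tt : WormState m n) : Prop := Reaches m n st tt ∧ Reaches m n tt st

/-- The fully-packed configuration consisting of all horizontal edges. -/
noncomputable def Hconfig : Finset (Sym2 (Vtx m n)) :=
  Finset.image (fun p : Vtx m n => s(p, (p.1 + 1, p.2))) Finset.univ

section Main
variable {m n : ℕ} [NeZero m] [NeZero n]

/-! ### ZMod helpers -/

lemma zmod_cast_val {k : ℕ} [NeZero k] (a : ZMod k) : ((a.val : ℕ) : ZMod k) = a :=
  ZMod.natCast_rightInverse a

lemma zmod_val_add_one_parity {k : ℕ} [NeZero k] (hk : Even k) (a : ZMod k) :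
    Even ((a + 1).val) ↔ ¬ Even a.val := by
  have h2 : 2 ≤ k := by
    rcases hk with ⟨c, hc⟩
    have := NeZero.pos k; omega
  haveI : Fact (1 < k) := ⟨by omega⟩
  have hlt := ZMod.val_lt a
  rw [ZMod.val_add, ZMod.val_one]
  rcases Nat.lt_or_ge (a.val + 1) k with h | h
  · rw [Nat.mod_eq_of_lt h]
    simp [Nat.even_add_one]
  · have he : a.val + 1 = k := by omega
    rw [he, Nat.mod_self]
    rcases hk with ⟨c, hc⟩
    have hodd : ¬ Even a.val := by rw [Nat.even_iff]; omega
    simp [hodd]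

lemma zmod_val_sub_one_parity {k : ℕ} [NeZero k] (hk : Even k) (a : ZMod k) :
    Even ((a - 1).val) ↔ ¬ Even a.val := by
  have := zmod_val_add_one_parity hk (a - 1)
  rw [sub_add_cancel] at this
  tauto

lemma zmod_one_ne_zero {k : ℕ} [NeZero k] (hk : 2 ≤ k) : (1 : ZMod k) ≠ 0 := by
  haveI : Fact (1 < k) := ⟨by omega⟩
  exact one_ne_zero

lemma zmod_add_one_ne {k : ℕ} [NeZero k] (hk : 2 ≤ k) (a : ZMod k) : a + 1 ≠ a := by
  intro h
  have : (1 : ZMod k) = 0 := by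
    have := congrArg (· - a) h
    simpa [add_comm, add_sub_cancel_right] using this
  exact zmod_one_ne_zero hk this

lemma zmod_sub_one_ne {k : ℕ} [NeZero k] (hk : 2 ≤ k) (a : ZMod k) : a - 1 ≠ a := by
  intro h
  have h2 := congrArg (· + 1) h
  simp only [sub_add_cancel] at h2
  exact zmod_add_one_ne hk a h2.symm

lemma zmod_add_one_ne_sub_one {k : ℕ} [NeZero k] (hk4 : 4 ≤ k) (hk : Even k) (a : ZMod k) :
    a + 1 ≠ a - 1 := by
  intro h
  have h0 : (a + 1) - (a - 1) = 0 := sub_eq_zero.mpr h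
  have h2 : (2 : ZMod k) = 0 := by linear_combination h0
  have h3 : ((2 : ℕ) : ZMod k) = 0 := by exact_mod_cast h2
  rw [ZMod.natCast_eq_zero_iff] at h3
  have := Nat.le_of_dvd (by norm_num) h3
  omega

lemma zmod_val_sub_one {k : ℕ} [NeZero k] (a : ZMod k) (ha : a ≠ 0) : (a - 1).val = a.val - 1 := by
  have h1 : 1 ≤ a.val := by
    have := ZMod.val_pos.mpr ha; omega
  have hlt := ZMod.val_lt a
  have : a - 1 = ((a.val - 1 : ℕ) : ZMod k) := by
    rw [Nat.cast_sub h1, zmod_cast_val]; simp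
  rw [this, ZMod.val_cast_of_lt (by omega)]

/-! ### Edge structure -/

def hR (x : Vtx m n) : Sym2 (Vtx m n) := s(x, (x.1 + 1, x.2))
def hL (x : Vtx m n) : Sym2 (Vtx m n) := s(x, (x.1 - 1, x.2))
def vnb (x : Vtx m n) : Vtx m n :=
  if Even (x.1.val + x.2.val) then (x.1, x.2 + 1) else (x.1, x.2 - 1)
def vE (x : Vtx m n) : Sym2 (Vtx m n) := s(x, vnb x)

lemma honeyAdj_symm {x y : Vtx m n} (h : HoneyAdj m n x y) : HoneyAdj m n y x := by
  rcases h with ⟨h1, h2 | h2⟩ | ⟨h1, h2 | h2⟩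
  · exact Or.inl ⟨h1.symm, Or.inr h2⟩
  · exact Or.inl ⟨h1.symm, Or.inl h2⟩
  · exact Or.inr ⟨h1.symm, Or.inr ⟨h2.1, h1 ▸ h2.2⟩⟩
  · exact Or.inr ⟨h1.symm, Or.inl ⟨h2.1, h1.symm ▸ h2.2⟩⟩

lemma honeyAdj_ne (hm4 : 4 ≤ m) (hn4 : 4 ≤ n) {x y : Vtx m n} (h : HoneyAdj m n x y) :
    x ≠ y := by
  rintro rfl
  rcases h with ⟨h1, h2 | h2⟩ | ⟨h1, h2 | h2⟩
  · exact zmod_add_one_ne (by omega) x.1 h2.symm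
  · exact zmod_add_one_ne (by omega) x.1 h2.symm
  · exact zmod_add_one_ne (by omega) x.2 h2.1.symm
  · exact zmod_add_one_ne (by omega) x.2 h2.1.symm

lemma mem_honeyEdges_iff {e : Sym2 (Vtx m n)} :
    e ∈ honeyEdges m n ↔ ∃ x y, HoneyAdj m n x y ∧ e = s(x, y) := by
  unfold honeyEdges
  rw [Finset.mem_image]
  constructor
  · rintro ⟨p, hp, rfl⟩
    rw [Finset.mem_filter] at hp
    exact ⟨p.1, p.2, hp.2, rfl⟩
  · rintro ⟨x, y, h, rfl⟩
    exact ⟨(x, y), by simp [Finset.mem_filter, h], rfl⟩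

lemma honeyAdj_hR (x : Vtx m n) : HoneyAdj m n x (x.1 + 1, x.2) :=
  Or.inl ⟨rfl, Or.inl rfl⟩

lemma honeyAdj_hL (x : Vtx m n) : HoneyAdj m n x (x.1 - 1, x.2) :=
  Or.inl ⟨rfl, Or.inr (by simp)⟩

lemma honeyAdj_vnb (hn : Even n) (x : Vtx m n) : HoneyAdj m n x (vnb x) := by
  unfold vnb
  by_cases h : Even (x.1.val + x.2.val)
  · rw [if_pos h]; exact Or.inr ⟨rfl, Or.inl ⟨rfl, h⟩⟩
  · rw [if_neg h]
    refine Or.inr ⟨rfl, Or.inr ⟨by simp, ?_⟩⟩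
    simp only
    have := zmod_val_sub_one_parity hn x.2
    simp only [Nat.even_add] at h ⊢
    tauto

lemma hR_mem (x : Vtx m n) : hR x ∈ honeyEdges m n :=
  mem_honeyEdges_iff.mpr ⟨x, _, honeyAdj_hR x, rfl⟩

lemma hL_mem (x : Vtx m n) : hL x ∈ honeyEdges m n :=
  mem_honeyEdges_iff.mpr ⟨x, _, honeyAdj_hL x, rfl⟩

lemma vE_mem (hn : Even n) (x : Vtx m n) : vE x ∈ honeyEdges m n :=
  mem_honeyEdges_iff.mpr ⟨x, _, honeyAdj_vnb hn x, rfl⟩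

lemma vnb_ne (hn4 : 4 ≤ n) (x : Vtx m n) : vnb x ≠ x := by
  unfold vnb
  split_ifs <;> intro h <;> rw [Prod.ext_iff] at h
  · exact zmod_add_one_ne (by omega) x.2 h.2
  · exact zmod_sub_one_ne (by omega) x.2 h.2

lemma vnb_fst (x : Vtx m n) : (vnb x).1 = x.1 := by
  unfold vnb; split_ifs <;> rfl

/-- Classification of honeycomb edges through a vertex. -/
lemma incident_cases (hn : Even n)
    {e : Sym2 (Vtx m n)} (he : e ∈ honeyEdges m n) {x : Vtx m n} (hx : x ∈ e) :
    e = hR x ∨ e = hL x ∨ e = vE x := by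
  rw [mem_honeyEdges_iff] at he
  obtain ⟨a, b, hab, rfl⟩ := he
  have key : ∀ a b : Vtx m n, HoneyAdj m n a b →
      s(a, b) = hR a ∨ s(a, b) = hL a ∨ s(a, b) = vE a := by
    intro a b hab
    rcases hab with ⟨h1, h2 | h2⟩ | ⟨h1, h2 | h2⟩
    · left
      have hb : b = (a.1 + 1, a.2) := by rw [Prod.ext_iff]; exact ⟨h2, h1.symm⟩
      rw [hb]; rfl
    · right; left
      have hb : b = (a.1 - 1, a.2) := by
        rw [Prod.ext_iff]
        refine ⟨?_, h1.symm⟩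
        rw [h2]; ring
      rw [hb]; rfl
    · right; right
      have hb : b = (a.1, a.2 + 1) := by rw [Prod.ext_iff]; exact ⟨h1.symm, h2.1⟩
      rw [hb]
      unfold vE vnb
      rw [if_pos h2.2]
    · right; right
      have hb : b = (a.1, a.2 - 1) := by
        rw [Prod.ext_iff]
        refine ⟨h1.symm, ?_⟩
        rw [h2.1]; ring
      have hpar : ¬ Even (a.1.val + a.2.val) := by
        have h2' := h2.2
        rw [hb] at h2'
        simp only at h2'
        have := zmod_val_sub_one_parity hn a.2
        simp only [Nat.even_add] at h2' ⊢
        tauto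
      rw [hb]
      unfold vE vnb
      rw [if_neg hpar]
  rw [Sym2.mem_iff] at hx
  rcases hx with rfl | rfl
  · exact key x b hab
  · have := key x a (honeyAdj_symm hab)
    rwa [Sym2.eq_swap] at this
/-! ### Degree formula and Hconfig facts -/

lemma sym2_ne_of_ne {a b c : Vtx m n} (h : b ≠ c) (hb : b ≠ a) :
    s(a, b) ≠ s(a, c) := by
  intro he
  rw [Sym2.congr_right] at he
  exact h he

lemma mem_hR (x : Vtx m n) : x ∈ hR x := Sym2.mem_mk_left _ _
lemma mem_hL (x : Vtx m n) : x ∈ hL x := Sym2.mem_mk_left _ _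
lemma mem_vE (x : Vtx m n) : x ∈ vE x := Sym2.mem_mk_left _ _

lemma hR_ne_hL (hm : Even m) (hm4 : 4 ≤ m) (x : Vtx m n) : hR x ≠ hL x := by
  unfold hR hL
  apply sym2_ne_of_ne
  · intro h; rw [Prod.ext_iff] at h
    exact zmod_add_one_ne_sub_one hm4 hm x.1 h.1
  · intro h; rw [Prod.ext_iff] at h
    exact zmod_add_one_ne (by omega) x.1 h.1

lemma hR_ne_vE (hm4 : 4 ≤ m) (x : Vtx m n) : hR x ≠ vE x := by
  unfold hR vE
  apply sym2_ne_of_ne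
  · intro h
    have := congrArg Prod.fst h
    rw [vnb_fst] at this
    exact zmod_add_one_ne (by omega) x.1 this
  · intro h; rw [Prod.ext_iff] at h
    exact zmod_add_one_ne (by omega) x.1 h.1

lemma hL_ne_vE (hm4 : 4 ≤ m) (x : Vtx m n) : hL x ≠ vE x := by
  unfold hL vE
  apply sym2_ne_of_ne
  · intro h
    have := congrArg Prod.fst h
    rw [vnb_fst] at this
    exact zmod_sub_one_ne (by omega) x.1 this
  · intro h; rw [Prod.ext_iff] at h
    exact zmod_sub_one_ne (by omega) x.1 h.1

/-- The degree of `x` in `A ⊆ E` counts which of the three incident edges lie in `A`. -/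
lemma bdeg_formula (hm : Even m) (hn : Even n) (hm4 : 4 ≤ m) (hn4 : 4 ≤ n)
    {A : Finset (Sym2 (Vtx m n))} (hA : A ⊆ honeyEdges m n) (x : Vtx m n) :
    bdeg m n A x = (if hR x ∈ A then 1 else 0) + (if hL x ∈ A then 1 else 0)
      + (if vE x ∈ A then 1 else 0) := by
  unfold bdeg
  have hset : A.filter (fun e => x ∈ e)
      = ({hR x, hL x, vE x} : Finset (Sym2 (Vtx m n))).filter (fun e => e ∈ A) := by
    ext e
    simp only [Finset.mem_filter, Finset.mem_insert, Finset.mem_singleton]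
    constructor
    · rintro ⟨heA, hxe⟩
      exact ⟨incident_cases hn (hA heA) hxe, heA⟩
    · rintro ⟨hcase, heA⟩
      refine ⟨heA, ?_⟩
      rcases hcase with rfl | rfl | rfl
      exacts [mem_hR x, mem_hL x, mem_vE x]
  rw [hset, Finset.card_filter]
  rw [Finset.sum_insert (by
    simp only [Finset.mem_insert, Finset.mem_singleton]
    push_neg
    exact ⟨hR_ne_hL hm hm4 x, hR_ne_vE hm4 x⟩)]
  rw [Finset.sum_insert (by
    simp only [Finset.mem_singleton]
    exact hL_ne_vE hm4 x)]
  rw [Finset.sum_singleton]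
  ring

lemma bdeg_le_three (hm : Even m) (hn : Even n) (hm4 : 4 ≤ m) (hn4 : 4 ≤ n)
    {A : Finset (Sym2 (Vtx m n))} (hA : A ⊆ honeyEdges m n) (x : Vtx m n) :
    bdeg m n A x ≤ 3 := by
  rw [bdeg_formula hm hn hm4 hn4 hA x]
  split_ifs <;> omega

lemma mem_Hconfig_iff {e : Sym2 (Vtx m n)} :
    e ∈ Hconfig m n ↔ ∃ p : Vtx m n, e = s(p, (p.1 + 1, p.2)) := by
  unfold Hconfig
  rw [Finset.mem_image]
  constructor
  · rintro ⟨p, _, rfl⟩; exact ⟨p, rfl⟩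
  · rintro ⟨p, rfl⟩; exact ⟨p, Finset.mem_univ p, rfl⟩

lemma hR_mem_Hconfig (x : Vtx m n) : hR x ∈ Hconfig m n :=
  mem_Hconfig_iff.mpr ⟨x, rfl⟩

lemma hL_mem_Hconfig (x : Vtx m n) : hL x ∈ Hconfig m n := by
  rw [mem_Hconfig_iff]
  refine ⟨(x.1 - 1, x.2), ?_⟩
  unfold hL
  rw [Sym2.eq_swap]
  congr 1
  all_goals ext <;> simp

lemma vE_not_mem_Hconfig (hm4 : 4 ≤ m) (hn4 : 4 ≤ n) (x : Vtx m n) :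
    vE x ∉ Hconfig m n := by
  rw [mem_Hconfig_iff]
  rintro ⟨p, hp⟩
  unfold vE at hp
  rw [Sym2.eq_iff] at hp
  rcases hp with ⟨h1, h2⟩ | ⟨h1, h2⟩
  · -- x = p, vnb x = (p.1+1, p.2)
    have := congrArg Prod.fst h2
    rw [vnb_fst, ← h1] at this
    exact zmod_add_one_ne (by omega) x.1 this.symm
  · -- x = (p.1+1,p.2), vnb x = p
    have h3 := congrArg Prod.fst h2
    rw [vnb_fst, h1] at h3
    exact zmod_add_one_ne (by omega) p.1 h3
  
lemma Hconfig_subset : Hconfig m n ⊆ honeyEdges m n := by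
  intro e he
  rw [mem_Hconfig_iff] at he
  obtain ⟨p, rfl⟩ := he
  exact mem_honeyEdges_iff.mpr ⟨p, _, honeyAdj_hR p, rfl⟩

lemma bdeg_Hconfig (hm : Even m) (hn : Even n) (hm4 : 4 ≤ m) (hn4 : 4 ≤ n) (x : Vtx m n) :
    bdeg m n (Hconfig m n) x = 2 := by
  rw [bdeg_formula hm hn hm4 hn4 Hconfig_subset x]
  rw [if_pos (hR_mem_Hconfig x), if_pos (hL_mem_Hconfig x),
    if_neg (vE_not_mem_Hconfig hm4 hn4 x)]

/-! ### Toggling edges -/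

lemma bdeg_insert {A : Finset (Sym2 (Vtx m n))} {e : Sym2 (Vtx m n)} (he : e ∉ A)
    (x : Vtx m n) :
    bdeg m n (insert e A) x = bdeg m n A x + if x ∈ e then 1 else 0 := by
  unfold bdeg
  rw [Finset.filter_insert]
  split_ifs with h
  · rw [Finset.card_insert_of_notMem (by
      intro hc; exact he (Finset.mem_of_mem_filter e hc))]
  · omega

lemma bdeg_erase {A : Finset (Sym2 (Vtx m n))} {e : Sym2 (Vtx m n)} (he : e ∈ A)
    (x : Vtx m n) :
    bdeg m n A x = bdeg m n (A.erase e) x + if x ∈ e then 1 else 0 := by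
  conv_lhs => rw [← Finset.insert_erase he]
  rw [bdeg_insert (Finset.notMem_erase e A) x]
/-! ### Worm states and toggling -/

lemma odd_bdeg_insert {A : Finset (Sym2 (Vtx m n))} {a b x : Vtx m n}
    (he : s(a, b) ∉ A) :
    Odd (bdeg m n (insert s(a, b) A) x) ↔ ((x = a ∨ x = b) ↔ ¬ Odd (bdeg m n A x)) := by
  rw [bdeg_insert he x]
  by_cases hx : x ∈ s(a, b)
  · rw [if_pos hx]
    rw [Sym2.mem_iff] at hx
    simp only [hx, true_iff, true_or, iff_true]
    simp only [Nat.odd_iff]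
    omega
  · rw [if_neg hx]
    rw [Sym2.mem_iff] at hx
    simp only [hx, false_iff, iff_false, not_not, add_zero]
    try tauto

lemma odd_bdeg_erase {A : Finset (Sym2 (Vtx m n))} {a b x : Vtx m n}
    (he : s(a, b) ∈ A) :
    Odd (bdeg m n (A.erase s(a, b)) x) ↔ ((x = a ∨ x = b) ↔ ¬ Odd (bdeg m n A x)) := by
  rw [bdeg_erase he x]
  by_cases hx : x ∈ s(a, b)
  · rw [if_pos hx]
    rw [Sym2.mem_iff] at hx
    simp only [hx, true_iff, true_or, iff_true]
    simp only [Nat.odd_iff]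
    omega
  · rw [if_neg hx]
    rw [Sym2.mem_iff] at hx
    simp only [hx, false_iff, iff_false, not_not, add_zero]
    try tauto

lemma isWormState_symm {A : Finset (Sym2 (Vtx m n))} {u v : Vtx m n}
    (h : IsWormState m n A u v) : IsWormState m n A v u :=
  ⟨h.1, fun x => by rw [h.2 x]; tauto⟩

lemma wormState_insert_open {A : Finset (Sym2 (Vtx m n))} {u v w : Vtx m n}
    (h : IsWormState m n A u v) (huv : u ≠ v) (hwu : w ≠ u) (hwv : w ≠ v)
    (he : s(u, w) ∉ A) (hhe : s(u, w) ∈ honeyEdges m n) :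
    IsWormState m n (insert s(u, w) A) w v := by
  refine ⟨Finset.insert_subset hhe h.1, fun x => ?_⟩
  rw [odd_bdeg_insert he, h.2 x]
  by_cases h1 : x = u <;> by_cases h2 : x = w <;> by_cases h3 : x = v <;> simp_all

lemma wormState_insert_close {A : Finset (Sym2 (Vtx m n))} {u v : Vtx m n}
    (h : IsWormState m n A u v) (huv : u ≠ v)
    (he : s(u, v) ∉ A) (hhe : s(u, v) ∈ honeyEdges m n) :
    IsWormState m n (insert s(u, v) A) v v := by
  refine ⟨Finset.insert_subset hhe h.1, fun x => ?_⟩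
  rw [odd_bdeg_insert he, h.2 x]
  by_cases h1 : x = u <;> by_cases h3 : x = v <;> simp_all

lemma wormState_insert_diag {A : Finset (Sym2 (Vtx m n))} {v w : Vtx m n}
    (h : IsWormState m n A v v) (hwv : w ≠ v)
    (he : s(v, w) ∉ A) (hhe : s(v, w) ∈ honeyEdges m n) :
    IsWormState m n (insert s(v, w) A) w v := by
  refine ⟨Finset.insert_subset hhe h.1, fun x => ?_⟩
  rw [odd_bdeg_insert he, h.2 x]
  by_cases h1 : x = v <;> by_cases h2 : x = w <;> simp_all

lemma wormState_erase_open {A : Finset (Sym2 (Vtx m n))} {u v w : Vtx m n}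
    (h : IsWormState m n A u v) (huv : u ≠ v) (hwu : w ≠ u) (hwv : w ≠ v)
    (he : s(u, w) ∈ A) :
    IsWormState m n (A.erase s(u, w)) w v := by
  refine ⟨(Finset.erase_subset _ _).trans h.1, fun x => ?_⟩
  rw [odd_bdeg_erase he, h.2 x]
  by_cases h1 : x = u <;> by_cases h2 : x = w <;> by_cases h3 : x = v <;> simp_all

lemma wormState_erase_close {A : Finset (Sym2 (Vtx m n))} {u v : Vtx m n}
    (h : IsWormState m n A u v) (huv : u ≠ v) (he : s(u, v) ∈ A) :
    IsWormState m n (A.erase s(u, v)) v v := by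
  refine ⟨(Finset.erase_subset _ _).trans h.1, fun x => ?_⟩
  rw [odd_bdeg_erase he, h.2 x]
  by_cases h1 : x = u <;> by_cases h3 : x = v <;> simp_all

/-! ### Reachability machinery -/

lemma pinf_nonneg (st tt : WormState m n) : 0 ≤ Pinf m n st tt := by
  unfold Pinf
  split_ifs <;> positivity

lemma pinf_pow_nonneg (k : ℕ) (st tt : WormState m n) : 0 ≤ (Pinf m n ^ k) st tt := by
  induction k generalizing st tt with
  | zero =>
    rw [pow_zero, Matrix.one_apply]
    split_ifs <;> norm_num
  | succ k ih =>
    rw [pow_succ, Matrix.mul_apply]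
    exact Finset.sum_nonneg fun r _ => mul_nonneg (ih st r) (pinf_nonneg r tt)

lemma reaches_refl (st : WormState m n) : Reaches m n st st :=
  ⟨0, by rw [pow_zero]; rw [Matrix.one_apply_eq]; norm_num⟩

lemma reaches_trans {s t u : WormState m n} (h1 : Reaches m n s t) (h2 : Reaches m n t u) :
    Reaches m n s u := by
  obtain ⟨k1, hk1⟩ := h1
  obtain ⟨k2, hk2⟩ := h2
  refine ⟨k1 + k2, ?_⟩
  rw [pow_add, Matrix.mul_apply]
  have hle : (Pinf m n ^ k1) s t * (Pinf m n ^ k2) t u ≤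
      ∑ r, (Pinf m n ^ k1) s r * (Pinf m n ^ k2) r u :=
    Finset.single_le_sum
      (fun r _ => mul_nonneg (pinf_pow_nonneg k1 s r) (pinf_pow_nonneg k2 r u))
      (Finset.mem_univ t)
  nlinarith

lemma reaches_single {s t : WormState m n} (h : 0 < Pinf m n s t) : Reaches m n s t :=
  ⟨1, by rwa [pow_one]⟩

/-! ### Positivity helpers -/

lemma ite_nonneg' (c : Prop) [Decidable c] {a : ℝ} (ha : 0 ≤ a) : 0 ≤ ite c a 0 := by
  split_ifs <;> simp [ha]

lemma two_ite_pos {c1 c2 : Prop} [Decidable c1] [Decidable c2] {a1 a2 : ℝ}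
    (h1 : 0 ≤ a1) (h2 : 0 ≤ a2)
    (hpos : (c1 ∧ 0 < a1) ∨ (c2 ∧ 0 < a2)) :
    0 < ite c1 a1 0 + ite c2 a2 0 := by
  rcases hpos with ⟨hc, ha⟩ | ⟨hc, ha⟩
  · rw [if_pos hc]
    have := ite_nonneg' c2 h2
    linarith
  · rw [if_pos hc]
    have := ite_nonneg' c1 h1
    linarith

lemma four_ite_pos {c1 c2 c3 c4 : Prop}
    [Decidable c1] [Decidable c2] [Decidable c3] [Decidable c4] {a1 a2 a3 a4 : ℝ}
    (h1 : 0 ≤ a1) (h2 : 0 ≤ a2) (h3 : 0 ≤ a3) (h4 : 0 ≤ a4)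
    (hpos : (c1 ∧ 0 < a1) ∨ (c2 ∧ 0 < a2) ∨ (c3 ∧ 0 < a3) ∨ (c4 ∧ 0 < a4)) :
    0 < ite c1 a1 0 + ite c2 a2 0 + ite c3 a3 0 + ite c4 a4 0 := by
  have n1 := ite_nonneg' c1 h1
  have n2 := ite_nonneg' c2 h2
  have n3 := ite_nonneg' c3 h3
  have n4 := ite_nonneg' c4 h4
  rcases hpos with ⟨hc, ha⟩ | ⟨hc, ha⟩ | ⟨hc, ha⟩ | ⟨hc, ha⟩ <;>
    rw [if_pos hc] <;> linarith

/-! ### The elementary worm moves -/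

lemma reaches_diagAdd {A : Finset (Sym2 (Vtx m n))} {v w : Vtx m n}
    (h : IsWormState m n A v v) (h' : IsWormState m n (insert s(v, w) A) w v)
    (hadj : HoneyAdj m n v w) (he : s(v, w) ∉ A) :
    Reaches m n ⟨(A, v, v), h⟩ ⟨(insert s(v, w) A, w, v), h'⟩ := by
  apply reaches_single
  unfold Pinf
  dsimp only
  rw [if_pos rfl]
  apply two_ite_pos (by positivity) (by norm_num)
  exact Or.inr ⟨⟨w, hadj, he, rfl, Or.inl ⟨rfl, rfl⟩⟩, by norm_num⟩

lemma reaches_headRemove {A : Finset (Sym2 (Vtx m n))} {u v w : Vtx m n}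
    (h : IsWormState m n A u v) (h' : IsWormState m n (A.erase s(u, w)) w v)
    (huv : u ≠ v) (hdeg : bdeg m n A u = 3) (hadj : HoneyAdj m n u w)
    (he : s(u, w) ∈ A) :
    Reaches m n ⟨(A, u, v), h⟩ ⟨(A.erase s(u, w), w, v), h'⟩ := by
  apply reaches_single
  unfold Pinf
  dsimp only
  rw [if_neg huv]
  apply four_ite_pos (by norm_num) (by norm_num) (by norm_num) (by norm_num)
  exact Or.inl ⟨⟨hdeg, w, hadj, he, rfl, rfl, rfl⟩, by norm_num⟩

lemma reaches_headAdd {A : Finset (Sym2 (Vtx m n))} {u v w : Vtx m n}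
    (h : IsWormState m n A u v) (h' : IsWormState m n (insert s(u, w) A) w v)
    (huv : u ≠ v) (hdeg : bdeg m n A u = 1) (hadj : HoneyAdj m n u w)
    (he : s(u, w) ∉ A) :
    Reaches m n ⟨(A, u, v), h⟩ ⟨(insert s(u, w) A, w, v), h'⟩ := by
  apply reaches_single
  unfold Pinf
  dsimp only
  rw [if_neg huv]
  apply four_ite_pos (by norm_num) (by norm_num) (by norm_num) (by norm_num)
  exact Or.inr (Or.inl ⟨⟨hdeg, w, hadj, he, rfl, rfl, rfl⟩, by norm_num⟩)

lemma reaches_tailRemove {A : Finset (Sym2 (Vtx m n))} {u v w : Vtx m n}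
    (h : IsWormState m n A u v) (h' : IsWormState m n (A.erase s(v, w)) u w)
    (huv : u ≠ v) (hdeg : bdeg m n A v = 3) (hadj : HoneyAdj m n v w)
    (he : s(v, w) ∈ A) :
    Reaches m n ⟨(A, u, v), h⟩ ⟨(A.erase s(v, w), u, w), h'⟩ := by
  apply reaches_single
  unfold Pinf
  dsimp only
  rw [if_neg huv]
  apply four_ite_pos (by norm_num) (by norm_num) (by norm_num) (by norm_num)
  exact Or.inr (Or.inr (Or.inl ⟨⟨hdeg, w, hadj, he, rfl, rfl, rfl⟩, by norm_num⟩))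
/-! ### Primed move variants -/

lemma reaches_headRemove' {A B' : Finset (Sym2 (Vtx m n))} {u v w : Vtx m n}
    (h : IsWormState m n A u v) (hB' : B' = A.erase s(u, w))
    (h' : IsWormState m n B' w v)
    (huv : u ≠ v) (hdeg : bdeg m n A u = 3) (hadj : HoneyAdj m n u w)
    (he : s(u, w) ∈ A) :
    Reaches m n ⟨(A, u, v), h⟩ ⟨(B', w, v), h'⟩ := by
  subst hB'; exact reaches_headRemove h h' huv hdeg hadj he

lemma reaches_headAdd' {A B' : Finset (Sym2 (Vtx m n))} {u v w : Vtx m n}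
    (h : IsWormState m n A u v) (hB' : B' = insert s(u, w) A)
    (h' : IsWormState m n B' w v)
    (huv : u ≠ v) (hdeg : bdeg m n A u = 1) (hadj : HoneyAdj m n u w)
    (he : s(u, w) ∉ A) :
    Reaches m n ⟨(A, u, v), h⟩ ⟨(B', w, v), h'⟩ := by
  subst hB'; exact reaches_headAdd h h' huv hdeg hadj he

lemma reaches_tailRemove' {A B' : Finset (Sym2 (Vtx m n))} {u v w : Vtx m n}
    (h : IsWormState m n A u v) (hB' : B' = A.erase s(v, w))
    (h' : IsWormState m n B' u w)
    (huv : u ≠ v) (hdeg : bdeg m n A v = 3) (hadj : HoneyAdj m n v w)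
    (he : s(v, w) ∈ A) :
    Reaches m n ⟨(A, u, v), h⟩ ⟨(B', u, w), h'⟩ := by
  subst hB'; exact reaches_tailRemove h h' huv hdeg hadj he

/-! ### The distance to the fully packed configuration -/

noncomputable def Phi (A : Finset (Sym2 (Vtx m n))) : ℕ := (symmDiff A (Hconfig m n)).card

lemma phi_insert_memH {A : Finset (Sym2 (Vtx m n))} {e : Sym2 (Vtx m n)}
    (heH : e ∈ Hconfig m n) (heA : e ∉ A) : Phi (insert e A) + 1 = Phi A := by
  unfold Phi
  have hset : symmDiff (insert e A) (Hconfig m n) = (symmDiff A (Hconfig m n)).erase e := by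
    ext f
    by_cases hf : f = e
    · subst hf
      simp [Finset.mem_symmDiff, heH, heA]
    · simp [Finset.mem_symmDiff, Finset.mem_insert, hf]
  have hmem : e ∈ symmDiff A (Hconfig m n) := by
    simp [Finset.mem_symmDiff, heH, heA]
  rw [hset, Finset.card_erase_of_mem hmem]
  have := Finset.card_pos.mpr ⟨e, hmem⟩
  omega

lemma phi_insert_notH {A : Finset (Sym2 (Vtx m n))} {e : Sym2 (Vtx m n)}
    (heH : e ∉ Hconfig m n) (heA : e ∉ A) : Phi (insert e A) = Phi A + 1 := by
  unfold Phi
  have hset : symmDiff (insert e A) (Hconfig m n) = insert e (symmDiff A (Hconfig m n)) := by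
    ext f
    by_cases hf : f = e
    · subst hf
      simp [Finset.mem_symmDiff, heH, heA]
    · simp [Finset.mem_symmDiff, Finset.mem_insert, hf]
  have hmem : e ∉ symmDiff A (Hconfig m n) := by
    simp [Finset.mem_symmDiff, heH, heA]
  rw [hset, Finset.card_insert_of_notMem hmem]

lemma phi_erase_memH {A : Finset (Sym2 (Vtx m n))} {e : Sym2 (Vtx m n)}
    (heH : e ∈ Hconfig m n) (heA : e ∈ A) : Phi (A.erase e) = Phi A + 1 := by
  unfold Phi
  have hset : symmDiff (A.erase e) (Hconfig m n) = insert e (symmDiff A (Hconfig m n)) := by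
    ext f
    by_cases hf : f = e
    · subst hf
      simp [Finset.mem_symmDiff, heH, heA]
    · simp [Finset.mem_symmDiff, Finset.mem_erase, hf]
  have hmem : e ∉ symmDiff A (Hconfig m n) := by
    simp [Finset.mem_symmDiff, heH, heA]
  rw [hset, Finset.card_insert_of_notMem hmem]

lemma phi_erase_notH {A : Finset (Sym2 (Vtx m n))} {e : Sym2 (Vtx m n)}
    (heH : e ∉ Hconfig m n) (heA : e ∈ A) : Phi (A.erase e) + 1 = Phi A := by
  unfold Phi
  have hset : symmDiff (A.erase e) (Hconfig m n) = (symmDiff A (Hconfig m n)).erase e := by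
    ext f
    by_cases hf : f = e
    · subst hf
      simp [Finset.mem_symmDiff, heH, heA]
    · simp [Finset.mem_symmDiff, Finset.mem_erase, hf]
  have hmem : e ∈ symmDiff A (Hconfig m n) := by
    simp [Finset.mem_symmDiff, heH, heA]
  rw [hset, Finset.card_erase_of_mem hmem]
  have := Finset.card_pos.mpr ⟨e, hmem⟩
  omega

lemma phi_eq_zero_iff {A : Finset (Sym2 (Vtx m n))} : Phi A = 0 ↔ A = Hconfig m n := by
  unfold Phi
  rw [Finset.card_eq_zero, ← Finset.bot_eq_empty, symmDiff_eq_bot]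

/-! ### The head walk -/

lemma bdeg_even_of_diag {A : Finset (Sym2 (Vtx m n))} {v : Vtx m n}
    (h : IsWormState m n A v v) (x : Vtx m n) : Even (bdeg m n A x) := by
  rw [← Nat.not_odd_iff_even]
  rw [h.2 x]
  simp

lemma head_toggle (hm : Even m) (hn : Even n) (hm4 : 4 ≤ m) (hn4 : 4 ≤ n)
    {A : Finset (Sym2 (Vtx m n))} {u v : Vtx m n}
    (h : IsWormState m n A u v) (huv : u ≠ v) :
    ∃ (B : Finset (Sym2 (Vtx m n))) (w : Vtx m n) (hB : IsWormState m n B w v),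
      Reaches m n ⟨(A, u, v), h⟩ ⟨(B, w, v), hB⟩ ∧ Phi B + 1 = Phi A := by
  have hodd : Odd (bdeg m n A u) := (h.2 u).mpr ⟨Or.inl rfl, huv⟩
  have hle := bdeg_le_three hm hn hm4 hn4 h.1 u
  have hform := bdeg_formula hm hn hm4 hn4 h.1 u
  have h13 : bdeg m n A u = 1 ∨ bdeg m n A u = 3 := by
    rcases hodd with ⟨c, hc⟩; omega
  rcases h13 with h1 | h3
  · -- degree 1 : add a missing horizontal edge
    have hmiss : hR u ∉ A ∨ hL u ∉ A := by
      by_contra hc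
      push_neg at hc
      rw [if_pos hc.1, if_pos hc.2] at hform
      omega
    rcases hmiss with hmiss | hmiss
    · -- add hR u
      set w : Vtx m n := (u.1 + 1, u.2) with hw
      have hwu : w ≠ u := by
        intro hc
        rw [Prod.ext_iff] at hc
        exact zmod_add_one_ne (by omega) u.1 hc.1
      have hadj : HoneyAdj m n u w := honeyAdj_hR u
      have hphi : Phi (insert (hR u) A) + 1 = Phi A :=
        phi_insert_memH (hR_mem_Hconfig u) hmiss
      by_cases hwv : w = v
      · subst hwv
        refine ⟨insert (hR u) A, w, wormState_insert_close h huv hmiss (hR_mem u), ?_, hphi⟩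
        exact reaches_headAdd h _ huv h1 hadj hmiss
      · refine ⟨insert (hR u) A, w, wormState_insert_open h huv hwu hwv hmiss (hR_mem u),
          ?_, hphi⟩
        exact reaches_headAdd h _ huv h1 hadj hmiss
    · -- add hL u
      set w : Vtx m n := (u.1 - 1, u.2) with hw
      have hwu : w ≠ u := by
        intro hc
        rw [Prod.ext_iff] at hc
        exact zmod_sub_one_ne (by omega) u.1 hc.1
      have hadj : HoneyAdj m n u w := honeyAdj_hL u
      have hphi : Phi (insert (hL u) A) + 1 = Phi A :=
        phi_insert_memH (hL_mem_Hconfig u) hmiss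
      by_cases hwv : w = v
      · subst hwv
        refine ⟨insert (hL u) A, w, wormState_insert_close h huv hmiss (hL_mem u), ?_, hphi⟩
        exact reaches_headAdd h _ huv h1 hadj hmiss
      · refine ⟨insert (hL u) A, w, wormState_insert_open h huv hwu hwv hmiss (hL_mem u),
          ?_, hphi⟩
        exact reaches_headAdd h _ huv h1 hadj hmiss
  · -- degree 3 : remove the vertical edge
    have hvmem : vE u ∈ A := by
      by_contra hc
      rw [if_neg hc] at hform
      split_ifs at hform <;> omega
    set w : Vtx m n := vnb u with hw
    have hwu : w ≠ u := vnb_ne hn4 u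
    have hadj : HoneyAdj m n u w := honeyAdj_vnb hn u
    have hphi : Phi (A.erase (vE u)) + 1 = Phi A :=
      phi_erase_notH (vE_not_mem_Hconfig hm4 hn4 u) hvmem
    by_cases hwv : w = v
    · refine ⟨A.erase (vE u), w, ?_, ?_, hphi⟩
      · have := wormState_erase_close h huv (hwv ▸ hvmem)
        rw [← hwv] at this ⊢
        exact this
      · exact reaches_headRemove h _ huv h3 hadj hvmem
    · refine ⟨A.erase (vE u), w, wormState_erase_open h huv hwu hwv hvmem, ?_, hphi⟩
      exact reaches_headRemove h _ huv h3 hadj hvmem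

lemma headwalk (hm : Even m) (hn : Even n) (hm4 : 4 ≤ m) (hn4 : 4 ≤ n) :
    ∀ (N : ℕ) {A : Finset (Sym2 (Vtx m n))} {u v : Vtx m n}
      (h : IsWormState m n A u v) (huv : u ≠ v), Phi A ≤ N →
    ∃ (B : Finset (Sym2 (Vtx m n))) (w : Vtx m n) (hB : IsWormState m n B w w),
      Reaches m n ⟨(A, u, v), h⟩ ⟨(B, w, w), hB⟩ ∧ Phi B < Phi A := by
  intro N
  induction N with
  | zero =>
    intro A u v h huv hN
    obtain ⟨B, w, hB, _, hphi⟩ := head_toggle hm hn hm4 hn4 h huv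
    omega
  | succ N ih =>
    intro A u v h huv hN
    obtain ⟨B, w, hB, hr, hphi⟩ := head_toggle hm hn hm4 hn4 h huv
    by_cases hwv : w = v
    · subst hwv
      exact ⟨B, w, hB, hr, by omega⟩
    · obtain ⟨C, z, hC, hr2, hphi2⟩ := ih hB hwv (by omega)
      exact ⟨C, z, hC, reaches_trans hr hr2, by omega⟩
/-! ### Case (a): a missing horizontal edge at the diagonal defect -/

lemma caseA (hm : Even m) (hn : Even n) (hm4 : 4 ≤ m) (hn4 : 4 ≤ n)
    {A : Finset (Sym2 (Vtx m n))} {v : Vtx m n}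
    (h : IsWormState m n A v v) (hcase : hR v ∉ A ∨ hL v ∉ A) :
    ∃ (B : Finset (Sym2 (Vtx m n))) (w : Vtx m n) (hB : IsWormState m n B w w),
      Reaches m n ⟨(A, v, v), h⟩ ⟨(B, w, w), hB⟩ ∧ Phi B < Phi A := by
  rcases hcase with hmiss | hmiss
  · set y : Vtx m n := (v.1 + 1, v.2) with hy
    have hyv : y ≠ v := by
      intro hc; rw [Prod.ext_iff] at hc
      exact zmod_add_one_ne (by omega) v.1 hc.1
    have h1 : IsWormState m n (insert (hR v) A) y v :=
      wormState_insert_diag h hyv hmiss (hR_mem v)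
    have r1 : Reaches m n ⟨(A, v, v), h⟩ ⟨(insert (hR v) A, y, v), h1⟩ :=
      reaches_diagAdd h h1 (honeyAdj_hR v) hmiss
    have hphi : Phi (insert (hR v) A) + 1 = Phi A :=
      phi_insert_memH (hR_mem_Hconfig v) hmiss
    obtain ⟨B, w, hB, r2, hphi2⟩ := headwalk hm hn hm4 hn4 (Phi (insert (hR v) A)) h1 hyv le_rfl
    exact ⟨B, w, hB, reaches_trans r1 r2, by omega⟩
  · set y : Vtx m n := (v.1 - 1, v.2) with hy
    have hyv : y ≠ v := by
      intro hc; rw [Prod.ext_iff] at hc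
      exact zmod_sub_one_ne (by omega) v.1 hc.1
    have h1 : IsWormState m n (insert (hL v) A) y v :=
      wormState_insert_diag h hyv hmiss (hL_mem v)
    have r1 : Reaches m n ⟨(A, v, v), h⟩ ⟨(insert (hL v) A, y, v), h1⟩ :=
      reaches_diagAdd h h1 (honeyAdj_hL v) hmiss
    have hphi : Phi (insert (hL v) A) + 1 = Phi A :=
      phi_insert_memH (hL_mem_Hconfig v) hmiss
    obtain ⟨B, w, hB, r2, hphi2⟩ := headwalk hm hn hm4 hn4 (Phi (insert (hL v) A)) h1 hyv le_rfl
    exact ⟨B, w, hB, reaches_trans r1 r2, by omega⟩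

/-! ### Sliding the diagonal defect -/

lemma slide2 {A : Finset (Sym2 (Vtx m n))} {v z : Vtx m n}
    (h : IsWormState m n A v v) (hd : bdeg m n A v = 2)
    (hadj : HoneyAdj m n v z) (hz : z ≠ v) (hf : s(v, z) ∉ A) :
    ∃ h' : IsWormState m n A z z, Reaches m n ⟨(A, v, v), h⟩ ⟨(A, z, z), h'⟩ := by
  have hhe : s(v, z) ∈ honeyEdges m n := mem_honeyEdges_iff.mpr ⟨v, z, hadj, rfl⟩
  have h1 : IsWormState m n (insert s(v, z) A) z v :=
    wormState_insert_diag h hz hf hhe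
  have r1 : Reaches m n ⟨(A, v, v), h⟩ ⟨(insert s(v, z) A, z, v), h1⟩ :=
    reaches_diagAdd h h1 hadj hf
  have hdeg : bdeg m n (insert s(v, z) A) v = 3 := by
    rw [bdeg_insert hf v, if_pos (Sym2.mem_mk_left v z)]
    omega
  have h2 : IsWormState m n A z z := by
    have := wormState_erase_close (isWormState_symm h1) (fun hc => hz hc.symm)
      (Finset.mem_insert_self _ _)
    rwa [Finset.erase_insert hf] at this
  refine ⟨h2, reaches_trans r1 ?_⟩
  exact reaches_tailRemove' h1 (Finset.erase_insert hf).symm h2 (fun hc => hz hc)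
    hdeg hadj (Finset.mem_insert_self _ _)

lemma slide4 {A : Finset (Sym2 (Vtx m n))} {v x vp : Vtx m n}
    (h : IsWormState m n A v v) (hd : bdeg m n A v = 2)
    (hadjvx : HoneyAdj m n v x) (hfmem : s(v, x) ∈ A) (hxv : x ≠ v)
    (hadjvvp : HoneyAdj m n v vp) (hgnot : s(v, vp) ∉ A) (hvpv : vp ≠ v) (hvpx : vp ≠ x)
    (hdvp : bdeg m n A vp = 2) :
    ∃ h' : IsWormState m n A x x, Reaches m n ⟨(A, v, v), h⟩ ⟨(A, x, x), h'⟩ := by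
  have hghe : s(v, vp) ∈ honeyEdges m n := mem_honeyEdges_iff.mpr ⟨v, vp, hadjvvp, rfl⟩
  have hfhe : s(v, x) ∈ honeyEdges m n := mem_honeyEdges_iff.mpr ⟨v, x, hadjvx, rfl⟩
  have hgf : s(v, vp) ≠ s(v, x) := sym2_ne_of_ne hvpx hvpv
  set B1 : Finset (Sym2 (Vtx m n)) := insert s(v, vp) A with hB1
  set B2 : Finset (Sym2 (Vtx m n)) := B1.erase s(v, x) with hB2
  -- step 1
  have h1 : IsWormState m n B1 vp v := wormState_insert_diag h hvpv hgnot hghe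
  have r1 : Reaches m n ⟨(A, v, v), h⟩ ⟨(B1, vp, v), h1⟩ :=
    reaches_diagAdd h h1 hadjvvp hgnot
  -- step 2 : tail removes s(v,x)
  have hdB1v : bdeg m n B1 v = 3 := by
    rw [bdeg_insert hgnot v, if_pos (Sym2.mem_mk_left v vp)]
    omega
  have hfB1 : s(v, x) ∈ B1 := Finset.mem_insert_of_mem hfmem
  have h2 : IsWormState m n B2 vp x := by
    apply isWormState_symm
    exact wormState_erase_open (isWormState_symm h1) (fun hc => hvpv hc.symm)
      hxv hvpx.symm hfB1
  have r2 : Reaches m n ⟨(B1, vp, v), h1⟩ ⟨(B2, vp, x), h2⟩ :=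
    reaches_tailRemove' h1 rfl h2 (fun hc => hvpv hc) hdB1v hadjvx hfB1
  -- step 3 : head removes s(vp,v) = s(v,vp)
  have hvpnotf : vp ∉ s(v, x) := by
    rw [Sym2.mem_iff]
    push_neg
    exact ⟨hvpv, hvpx⟩
  have hdB2vp : bdeg m n B2 vp = 3 := by
    have e1 : bdeg m n B1 vp = bdeg m n B2 vp + if vp ∈ s(v, x) then 1 else 0 :=
      bdeg_erase hfB1 vp
    rw [if_neg hvpnotf] at e1
    have e2 : bdeg m n B1 vp = bdeg m n A vp + if vp ∈ s(v, vp) then 1 else 0 :=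
      bdeg_insert hgnot vp
    rw [if_pos (Sym2.mem_mk_right v vp)] at e2
    omega
  have hgB2 : s(vp, v) ∈ B2 := by
    rw [Sym2.eq_swap]
    exact Finset.mem_erase.mpr ⟨hgf, Finset.mem_insert_self _ _⟩
  have hB3eq : A.erase s(v, x) = B2.erase s(vp, v) := by
    rw [Sym2.eq_swap (a := vp)]
    rw [hB2, hB1, Finset.erase_right_comm, Finset.erase_insert hgnot]
  have h3 : IsWormState m n (A.erase s(v, x)) v x := by
    rw [hB3eq]
    exact wormState_erase_open h2 hvpx hvpv.symm (fun hc => hxv hc.symm) hgB2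
  have r3 : Reaches m n ⟨(B2, vp, x), h2⟩ ⟨(A.erase s(v, x), v, x), h3⟩ := by
    apply reaches_headRemove' h2 hB3eq h3 hvpx hdB2vp (honeyAdj_symm hadjvvp)
    exact hgB2
  -- step 4 : head adds back s(v,x)
  have hdAv : bdeg m n (A.erase s(v, x)) v = 1 := by
    have e1 : bdeg m n A v = bdeg m n (A.erase s(v, x)) v + if v ∈ s(v, x) then 1 else 0 :=
      bdeg_erase hfmem v
    rw [if_pos (Sym2.mem_mk_left v x)] at e1
    omega
  have h4 : IsWormState m n A x x := by
    have := wormState_insert_close h3 (fun hc => hxv hc.symm)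
      (Finset.notMem_erase _ _) hfhe
    rwa [Finset.insert_erase hfmem] at this
  have r4 : Reaches m n ⟨(A.erase s(v, x), v, x), h3⟩ ⟨(A, x, x), h4⟩ := by
    apply reaches_headAdd' h3 (Finset.insert_erase hfmem).symm h4
      (fun hc => hxv hc.symm) hdAv hadjvx (Finset.notMem_erase _ _)
  exact ⟨h4, reaches_trans r1 (reaches_trans r2 (reaches_trans r3 r4))⟩
/-! ### Navigation measure -/

noncomputable def Mnav (t v : Vtx m n) : ℕ :=
  if t.2 = v.2 then (t.1 - v.1).val
  else (m + 4) * (t.2 - v.2).val + (if Even (v.1.val + v.2.val) then 0 else 1)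

lemma parity_flip_fst (hm : Even m) (v : Vtx m n) :
    Even ((v.1 + 1).val + v.2.val) ↔ ¬ Even (v.1.val + v.2.val) := by
  have := zmod_val_add_one_parity hm v.1
  simp only [Nat.even_add]
  tauto

lemma nav_step (hm : Even m) (hn : Even n) (hm4 : 4 ≤ m) (hn4 : 4 ≤ n)
    {t v : Vtx m n} (hvt : v ≠ t) :
    ∃ w : Vtx m n,
      (w = (v.1 + 1, v.2) ∨ (w = (v.1, v.2 + 1) ∧ Even (v.1.val + v.2.val))) ∧
      Mnav t w < Mnav t v := by
  by_cases h2 : t.2 = v.2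
  · -- horizontal phase
    have h1 : t.1 ≠ v.1 := by
      intro hc; exact hvt (by rw [Prod.ext_iff]; exact ⟨hc.symm, h2.symm⟩)
    have hsub : t.1 - v.1 ≠ 0 := sub_ne_zero.mpr h1
    have hpos : 0 < (t.1 - v.1).val := ZMod.val_pos.mpr hsub
    refine ⟨(v.1 + 1, v.2), Or.inl rfl, ?_⟩
    unfold Mnav
    rw [if_pos h2, if_pos h2]
    have harith : t.1 - (v.1 + 1) = (t.1 - v.1) - 1 := by ring
    rw [harith, zmod_val_sub_one _ hsub]
    omega
  · -- vertical phase
    have hsubv : t.2 - v.2 ≠ 0 := sub_ne_zero.mpr h2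
    have hdpos : 0 < (t.2 - v.2).val := ZMod.val_pos.mpr hsubv
    by_cases heven : Even (v.1.val + v.2.val)
    · -- move up
      refine ⟨(v.1, v.2 + 1), Or.inr ⟨rfl, heven⟩, ?_⟩
      unfold Mnav
      dsimp only
      rw [if_neg h2, if_pos heven]
      have harith : t.2 - (v.2 + 1) = (t.2 - v.2) - 1 := by ring
      by_cases hδ1 : t.2 = v.2 + 1
      · rw [if_pos hδ1]
        have hlt : (t.1 - v.1).val < m := ZMod.val_lt _
        have hge : (m + 4) * 1 ≤ (m + 4) * (t.2 - v.2).val :=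
          Nat.mul_le_mul_left _ hdpos
        omega
      · rw [if_neg hδ1]
        rw [harith, zmod_val_sub_one _ hsubv]
        have hstep : (m + 4) * ((t.2 - v.2).val - 1) + (m + 4) * 1
            = (m + 4) * (t.2 - v.2).val := by
          rw [← Nat.mul_add]
          congr 1
          omega
        split_ifs <;> omega
    · -- fix parity by a horizontal step
      refine ⟨(v.1 + 1, v.2), Or.inl rfl, ?_⟩
      unfold Mnav
      dsimp only
      rw [if_neg h2, if_neg h2, if_neg heven]
      have hpar : Even ((v.1 + 1).val + v.2.val) := by
        rw [parity_flip_fst hm]; exact heven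
      rw [if_pos hpar]
      omega

/-! ### Existence of a target vertex -/

lemma exists_target (hm : Even m) (hn : Even n) (hm4 : 4 ≤ m) (hn4 : 4 ≤ n)
    {A : Finset (Sym2 (Vtx m n))} {v : Vtx m n}
    (h : IsWormState m n A v v) (hphi : Phi A ≠ 0) :
    ∃ t : Vtx m n, hR t ∉ A ∨ hL t ∉ A := by
  by_contra hc
  push_neg at hc
  have hHA : Hconfig m n ⊆ A := by
    intro e he
    obtain ⟨p, rfl⟩ := mem_Hconfig_iff.mp he
    exact (hc p).1
  obtain ⟨e, hemem⟩ := Finset.card_pos.mp (Nat.pos_of_ne_zero hphi)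
  rw [Finset.mem_symmDiff] at hemem
  rcases hemem with ⟨heA, heH⟩ | ⟨heH, heA⟩
  · obtain ⟨a, b, hab, rfl⟩ := mem_honeyEdges_iff.mp (h.1 heA)
    have hcases := incident_cases hn (h.1 heA) (Sym2.mem_mk_left a b)
    rcases hcases with hcase | hcase | hcase
    · exact heH (hcase ▸ hR_mem_Hconfig a)
    · exact heH (hcase ▸ hL_mem_Hconfig a)
    · have hdeg : bdeg m n A a = 3 := by
        rw [bdeg_formula hm hn hm4 hn4 h.1 a, if_pos (hc a).1, if_pos (hc a).2,
          if_pos (hcase ▸ heA)]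
      have heven := bdeg_even_of_diag h a
      rw [hdeg, Nat.even_iff] at heven
      omega
  · exact (heA (hHA heH)).elim
/-! ### Navigation of the diagonal defect -/

lemma navigate (hm : Even m) (hn : Even n) (hm4 : 4 ≤ m) (hn4 : 4 ≤ n) :
    ∀ (k : ℕ) {A : Finset (Sym2 (Vtx m n))} {v : Vtx m n}
      (h : IsWormState m n A v v) (t : Vtx m n),
      (hR t ∉ A ∨ hL t ∉ A) → Mnav t v ≤ k →
    ∃ (B : Finset (Sym2 (Vtx m n))) (w : Vtx m n) (hB : IsWormState m n B w w),
      Reaches m n ⟨(A, v, v), h⟩ ⟨(B, w, w), hB⟩ ∧ Phi B < Phi A := by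
  intro k
  induction k with
  | zero =>
    intro A v h t ht hk
    by_cases hcase : hR v ∉ A ∨ hL v ∉ A
    · exact caseA hm hn hm4 hn4 h hcase
    · push_neg at hcase
      have hvt : v ≠ t := by
        rintro rfl
        rcases ht with ht | ht
        exacts [ht hcase.1, ht hcase.2]
      obtain ⟨w, _, hwlt⟩ := nav_step hm hn hm4 hn4 hvt
      omega
  | succ k ih =>
    intro A v h t ht hk
    by_cases hcase : hR v ∉ A ∨ hL v ∉ A
    · exact caseA hm hn hm4 hn4 h hcase
    · push_neg at hcase
      have hvt : v ≠ t := by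
        rintro rfl
        rcases ht with ht | ht
        exacts [ht hcase.1, ht hcase.2]
      obtain ⟨w, hwform, hwlt⟩ := nav_step hm hn hm4 hn4 hvt
      have hdeven := bdeg_even_of_diag h v
      have hform := bdeg_formula hm hn hm4 hn4 h.1 v
      rw [if_pos hcase.1, if_pos hcase.2] at hform
      have hvE : vE v ∉ A ∧ bdeg m n A v = 2 := by
        rw [Nat.even_iff] at hdeven
        split_ifs at hform with hvm
        · omega
        · exact ⟨hvm, by omega⟩
      by_cases hfA : s(v, w) ∈ A
      · -- the step edge is present; it must be the horizontal edge hR v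
        have hwh : w = (v.1 + 1, v.2) := by
          rcases hwform with hw | ⟨hw, heven⟩
          · exact hw
          · exfalso
            have hveq : vE v = s(v, w) := by
              unfold vE vnb
              rw [if_pos heven, hw]
            exact hvE.1 (hveq ▸ hfA)
        subst hwh
        have hadjvp : HoneyAdj m n v (vnb v) := honeyAdj_vnb hn v
        have hvpv : vnb v ≠ v := vnb_ne hn4 v
        have hgnot : s(v, vnb v) ∉ A := hvE.1
        have hvpx : vnb v ≠ (v.1 + 1, v.2) := by
          intro hc
          have := congrArg Prod.fst hc
          rw [vnb_fst] at this
          exact zmod_add_one_ne (by omega) v.1 this.symm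
        have hvpdeven := bdeg_even_of_diag h (vnb v)
        have hvple := bdeg_le_three hm hn hm4 hn4 h.1 (vnb v)
        have h02 : bdeg m n A (vnb v) = 0 ∨ bdeg m n A (vnb v) = 2 := by
          rw [Nat.even_iff] at hvpdeven
          omega
        rcases h02 with h0 | h2v
        · -- the vertical neighbour is isolated : go there, it has a missing H-edge
          have hRvp : hR (vnb v) ∉ A := by
            intro hmem
            have hf2 := bdeg_formula hm hn hm4 hn4 h.1 (vnb v)
            rw [if_pos hmem] at hf2
            split_ifs at hf2 <;> omega
          obtain ⟨h', r1⟩ := slide2 h hvE.2 hadjvp hvpv hgnot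
          obtain ⟨B, w', hB, r2, hlt2⟩ := caseA hm hn hm4 hn4 h' (Or.inl hRvp)
          exact ⟨B, w', hB, reaches_trans r1 r2, hlt2⟩
        · -- four-step slide along the occupied horizontal edge
          have hxv : ((v.1 + 1, v.2) : Vtx m n) ≠ v := by
            intro hc
            rw [Prod.ext_iff] at hc
            exact zmod_add_one_ne (by omega) v.1 hc.1
          obtain ⟨h', r1⟩ := slide4 h hvE.2 (honeyAdj_hR v) hfA hxv hadjvp hgnot hvpv
            hvpx h2v
          obtain ⟨B, w', hB, r2, hlt2⟩ := ih h' t ht (by omega)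
          exact ⟨B, w', hB, reaches_trans r1 r2, hlt2⟩
      · -- the step edge is free : simple two-step slide
        have hadj : HoneyAdj m n v w ∧ w ≠ v := by
          rcases hwform with hw | ⟨hw, heven⟩
          · subst hw
            refine ⟨honeyAdj_hR v, ?_⟩
            intro hc
            rw [Prod.ext_iff] at hc
            exact zmod_add_one_ne (by omega) v.1 hc.1
          · subst hw
            refine ⟨Or.inr ⟨rfl, Or.inl ⟨rfl, heven⟩⟩, ?_⟩
            intro hc
            rw [Prod.ext_iff] at hc
            exact zmod_add_one_ne (by omega) v.2 hc.2
        obtain ⟨h', r1⟩ := slide2 h hvE.2 hadj.1 hadj.2 hfA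
        obtain ⟨B, w', hB, r2, hlt2⟩ := ih h' t ht (by omega)
        exact ⟨B, w', hB, reaches_trans r1 r2, hlt2⟩

/-! ### Part 1 -/

lemma isWormState_Hconfig (hm : Even m) (hn : Even n) (hm4 : 4 ≤ m) (hn4 : 4 ≤ n)
    (w : Vtx m n) : IsWormState m n (Hconfig m n) w w := by
  refine ⟨Hconfig_subset, fun x => ?_⟩
  rw [bdeg_Hconfig hm hn hm4 hn4 x]
  simp [Nat.odd_iff]

lemma main_diag (hm : Even m) (hn : Even n) (hm4 : 4 ≤ m) (hn4 : 4 ≤ n) :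
    ∀ (N : ℕ) {A : Finset (Sym2 (Vtx m n))} {v : Vtx m n}
      (h : IsWormState m n A v v), Phi A ≤ N →
    ∃ (w : Vtx m n) (hw : IsWormState m n (Hconfig m n) w w),
      Reaches m n ⟨(A, v, v), h⟩ ⟨(Hconfig m n, w, w), hw⟩ := by
  intro N
  induction N with
  | zero =>
    intro A v h hN
    have hA : A = Hconfig m n := phi_eq_zero_iff.mp (by omega)
    subst hA
    exact ⟨v, h, reaches_refl _⟩
  | succ N ih =>
    intro A v h hN
    by_cases hphi : Phi A = 0
    · have hA : A = Hconfig m n := phi_eq_zero_iff.mp hphi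
      subst hA
      exact ⟨v, h, reaches_refl _⟩
    · obtain ⟨t, ht⟩ := exists_target hm hn hm4 hn4 h hphi
      obtain ⟨B, w, hB, r1, hlt⟩ := navigate hm hn hm4 hn4 (Mnav t v) h t ht le_rfl
      obtain ⟨w', hw', r2⟩ := ih hB (by omega)
      exact ⟨w', hw', reaches_trans r1 r2⟩

lemma part1 (hm : Even m) (hn : Even n) (hm4 : 4 ≤ m) (hn4 : 4 ≤ n)
    (st : WormState m n) :
    ∃ (w : Vtx m n) (hw : IsWormState m n (Hconfig m n) w w),
      Reaches m n st ⟨(Hconfig m n, w, w), hw⟩ := by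
  obtain ⟨⟨A, u, v⟩, h⟩ := st
  by_cases huv : u = v
  · subst huv
    exact main_diag hm hn hm4 hn4 (Phi A) h le_rfl
  · obtain ⟨B, w, hB, r1, _⟩ := headwalk hm hn hm4 hn4 (Phi A) h huv le_rfl
    obtain ⟨w', hw', r2⟩ := main_diag hm hn hm4 hn4 (Phi B) hB le_rfl
    exact ⟨w', hw', reaches_trans r1 r2⟩
/-! ### The bipartite colouring -/

lemma parity_flip_snd (hn : Even n) (v : Vtx m n) :
    Even (v.1.val + (v.2 + 1).val) ↔ ¬ Even (v.1.val + v.2.val) := by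
  have := zmod_val_add_one_parity hn v.2
  simp only [Nat.even_add]
  tauto

lemma adj_color (hm : Even m) (hn : Even n) {x y : Vtx m n} (h : HoneyAdj m n x y) :
    Even (x.1.val + x.2.val) ↔ ¬ Even (y.1.val + y.2.val) := by
  rcases h with ⟨h1, h2 | h2⟩ | ⟨h1, h2 | h2⟩
  · have hy : Even (y.1.val + y.2.val) ↔ Even ((x.1 + 1).val + x.2.val) := by
      rw [h2, ← h1]
    rw [hy, parity_flip_fst hm]
    tauto
  · have hx : Even (x.1.val + x.2.val) ↔ Even ((y.1 + 1).val + y.2.val) := by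
      rw [h2, h1]
    rw [hx, parity_flip_fst hm]
  · have hy : Even (y.1.val + y.2.val) ↔ Even (x.1.val + (x.2 + 1).val) := by
      rw [h2.1, ← h1]
    rw [hy, parity_flip_snd hn]
    tauto
  · have hx : Even (x.1.val + x.2.val) ↔ Even (y.1.val + (y.2 + 1).val) := by
      rw [h2.1, h1]
    rw [hx, parity_flip_snd hn]

lemma count_endpoint_even (hm : Even m) (hn : Even n) (hm4 : 4 ≤ m) (hn4 : 4 ≤ n)
    {a b : Vtx m n} (hadj : HoneyAdj m n a b) :
    (Finset.univ.filter (fun x : Vtx m n => Even (x.1.val + x.2.val) ∧ x ∈ s(a, b))).card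
      = 1 := by
  have hcol := adj_color hm hn hadj
  by_cases hA : Even (a.1.val + a.2.val)
  · have : Finset.univ.filter (fun x : Vtx m n => Even (x.1.val + x.2.val) ∧ x ∈ s(a, b))
        = {a} := by
      ext x
      simp only [Finset.mem_filter, Finset.mem_univ, true_and, Finset.mem_singleton,
        Sym2.mem_iff]
      constructor
      · rintro ⟨hx, rfl | rfl⟩
        · rfl
        · exact absurd hx (by tauto)
      · rintro rfl
        exact ⟨hA, Or.inl rfl⟩
    rw [this, Finset.card_singleton]
  · have hB : Even (b.1.val + b.2.val) := by tauto
    have : Finset.univ.filter (fun x : Vtx m n => Even (x.1.val + x.2.val) ∧ x ∈ s(a, b))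
        = {b} := by
      ext x
      simp only [Finset.mem_filter, Finset.mem_univ, true_and, Finset.mem_singleton,
        Sym2.mem_iff]
      constructor
      · rintro ⟨hx, rfl | rfl⟩
        · exact absurd hx hA
        · rfl
      · rintro rfl
        exact ⟨hB, Or.inr rfl⟩
    rw [this, Finset.card_singleton]

lemma count_endpoint_odd (hm : Even m) (hn : Even n) (hm4 : 4 ≤ m) (hn4 : 4 ≤ n)
    {a b : Vtx m n} (hadj : HoneyAdj m n a b) :
    (Finset.univ.filter (fun x : Vtx m n => ¬ Even (x.1.val + x.2.val) ∧ x ∈ s(a, b))).card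
      = 1 := by
  have hcol := adj_color hm hn hadj
  by_cases hA : Even (a.1.val + a.2.val)
  · have hB : ¬ Even (b.1.val + b.2.val) := by tauto
    have : Finset.univ.filter (fun x : Vtx m n => ¬ Even (x.1.val + x.2.val) ∧ x ∈ s(a, b))
        = {b} := by
      ext x
      simp only [Finset.mem_filter, Finset.mem_univ, true_and, Finset.mem_singleton,
        Sym2.mem_iff]
      constructor
      · rintro ⟨hx, rfl | rfl⟩
        · exact absurd hA hx
        · rfl
      · rintro rfl
        exact ⟨hB, Or.inr rfl⟩
    rw [this, Finset.card_singleton]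
  · have : Finset.univ.filter (fun x : Vtx m n => ¬ Even (x.1.val + x.2.val) ∧ x ∈ s(a, b))
        = {a} := by
      ext x
      simp only [Finset.mem_filter, Finset.mem_univ, true_and, Finset.mem_singleton,
        Sym2.mem_iff]
      constructor
      · rintro ⟨hx, rfl | rfl⟩
        · rfl
        · exact absurd (by tauto : Even (x.1.val + x.2.val)) hx
      · rintro rfl
        exact ⟨hA, Or.inl rfl⟩
    rw [this, Finset.card_singleton]

lemma sum_bdeg_even (hm : Even m) (hn : Even n) (hm4 : 4 ≤ m) (hn4 : 4 ≤ n)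
    {A : Finset (Sym2 (Vtx m n))} (hA : A ⊆ honeyEdges m n) :
    ∑ x ∈ Finset.univ.filter (fun x : Vtx m n => Even (x.1.val + x.2.val)),
      bdeg m n A x = A.card := by
  have step1 : ∀ x : Vtx m n, bdeg m n A x = ∑ e ∈ A, if x ∈ e then 1 else 0 := by
    intro x; exact Finset.card_filter _ _
  simp_rw [step1]
  rw [Finset.sum_comm]
  have step2 : ∀ e ∈ A,
      (∑ x ∈ Finset.univ.filter (fun x : Vtx m n => Even (x.1.val + x.2.val)),
        if x ∈ e then 1 else 0) = 1 := by
    intro e he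
    rw [← Finset.card_filter, Finset.filter_filter]
    obtain ⟨a, b, hadj, rfl⟩ := mem_honeyEdges_iff.mp (hA he)
    exact count_endpoint_even hm hn hm4 hn4 hadj
  rw [Finset.sum_congr rfl step2]
  simp

lemma sum_bdeg_odd (hm : Even m) (hn : Even n) (hm4 : 4 ≤ m) (hn4 : 4 ≤ n)
    {A : Finset (Sym2 (Vtx m n))} (hA : A ⊆ honeyEdges m n) :
    ∑ x ∈ Finset.univ.filter (fun x : Vtx m n => ¬ Even (x.1.val + x.2.val)),
      bdeg m n A x = A.card := by
  have step1 : ∀ x : Vtx m n, bdeg m n A x = ∑ e ∈ A, if x ∈ e then 1 else 0 := by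
    intro x; exact Finset.card_filter _ _
  simp_rw [step1]
  rw [Finset.sum_comm]
  have step2 : ∀ e ∈ A,
      (∑ x ∈ Finset.univ.filter (fun x : Vtx m n => ¬ Even (x.1.val + x.2.val)),
        if x ∈ e then 1 else 0) = 1 := by
    intro e he
    rw [← Finset.card_filter, Finset.filter_filter]
    obtain ⟨a, b, hadj, rfl⟩ := mem_honeyEdges_iff.mp (hA he)
    exact count_endpoint_odd hm hn hm4 hn4 hadj
  rw [Finset.sum_congr rfl step2]
  simp

lemma card_even_eq_odd (hm : Even m) :
    (Finset.univ.filter (fun x : Vtx m n => Even (x.1.val + x.2.val))).card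
      = (Finset.univ.filter (fun x : Vtx m n => ¬ Even (x.1.val + x.2.val))).card := by
  apply Finset.card_bij' (i := fun (x : Vtx m n) _ => ((x.1 + 1, x.2) : Vtx m n))
    (j := fun (x : Vtx m n) _ => ((x.1 - 1, x.2) : Vtx m n))
  · intro x hx
    rw [Finset.mem_filter] at hx ⊢
    refine ⟨Finset.mem_univ _, ?_⟩
    rw [parity_flip_fst hm]
    simpa using hx.2
  · intro x hx
    rw [Finset.mem_filter] at hx ⊢
    refine ⟨Finset.mem_univ _, ?_⟩
    have := parity_flip_fst hm ((x.1 - 1, x.2) : Vtx m n)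
    simp only [sub_add_cancel] at this
    simp only
    by_contra hc
    exact (by simpa using hx.2 : ¬ Even (x.1.val + x.2.val)) (this.mpr hc)
  · intro x hx
    rw [Prod.ext_iff]
    constructor
    · simp
    · rfl
  · intro x hx
    rw [Prod.ext_iff]
    constructor
    · simp
    · rfl
/-! ### The invariant for Part 2 -/

def GoodSt (st : WormState m n) : Prop :=
  (∀ x : Vtx m n, x ≠ st.1.2.1 → x ≠ st.1.2.2 → bdeg m n st.1.1 x = 2) ∧
  (st.1.2.1 = st.1.2.2 → bdeg m n st.1.1 st.1.2.1 = 2)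

lemma deg_eq_core (hm : Even m) (hn : Even n) (hm4 : 4 ≤ m) (hn4 : 4 ≤ n)
    {A : Finset (Sym2 (Vtx m n))} (hA : A ⊆ honeyEdges m n) {u v : Vtx m n}
    (hu : Even (u.1.val + u.2.val)) (hv : ¬ Even (v.1.val + v.2.val))
    (hG : ∀ x, x ≠ u → x ≠ v → bdeg m n A x = 2) :
    bdeg m n A u = bdeg m n A v := by
  classical
  set W := Finset.univ.filter (fun x : Vtx m n => Even (x.1.val + x.2.val)) with hW
  set Bs := Finset.univ.filter (fun x : Vtx m n => ¬ Even (x.1.val + x.2.val)) with hBs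
  have hWsum : ∑ x ∈ W, bdeg m n A x = A.card := sum_bdeg_even hm hn hm4 hn4 hA
  have hBsum : ∑ x ∈ Bs, bdeg m n A x = A.card := sum_bdeg_odd hm hn hm4 hn4 hA
  have huW : u ∈ W := by rw [hW, Finset.mem_filter]; exact ⟨Finset.mem_univ _, hu⟩
  have hvB : v ∈ Bs := by rw [hBs, Finset.mem_filter]; exact ⟨Finset.mem_univ _, hv⟩
  rw [← Finset.add_sum_erase _ _ huW] at hWsum
  rw [← Finset.add_sum_erase _ _ hvB] at hBsum
  have hWr : ∑ x ∈ W.erase u, bdeg m n A x = (W.erase u).card * 2 := by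
    rw [Finset.sum_congr rfl (fun x hx => ?_), Finset.sum_const, smul_eq_mul]
    obtain ⟨hxu, hxW⟩ := Finset.mem_erase.mp hx
    refine hG x hxu fun hxv => ?_
    subst hxv
    rw [hW, Finset.mem_filter] at hxW
    exact hv hxW.2
  have hBr : ∑ x ∈ Bs.erase v, bdeg m n A x = (Bs.erase v).card * 2 := by
    rw [Finset.sum_congr rfl (fun x hx => ?_), Finset.sum_const, smul_eq_mul]
    obtain ⟨hxv, hxB⟩ := Finset.mem_erase.mp hx
    refine hG x (fun hxu => ?_) hxv
    subst hxu
    rw [hBs, Finset.mem_filter] at hxB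
    exact hxB.2 hu
  have hcard : W.card = Bs.card := card_even_eq_odd hm
  have hcW := Finset.card_erase_of_mem huW
  have hcB := Finset.card_erase_of_mem hvB
  have hWpos := Finset.card_pos.mpr ⟨u, huW⟩
  have hBpos := Finset.card_pos.mpr ⟨v, hvB⟩
  omega

lemma good_adj_deg_eq (hm : Even m) (hn : Even n) (hm4 : 4 ≤ m) (hn4 : 4 ≤ n)
    {A : Finset (Sym2 (Vtx m n))} (hA : A ⊆ honeyEdges m n) {u v : Vtx m n}
    (hadj : HoneyAdj m n u v)
    (hG : ∀ x, x ≠ u → x ≠ v → bdeg m n A x = 2) :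
    bdeg m n A u = bdeg m n A v := by
  have hcol := adj_color hm hn hadj
  by_cases hu : Even (u.1.val + u.2.val)
  · exact deg_eq_core hm hn hm4 hn4 hA hu (hcol.mp hu) hG
  · have hv : Even (v.1.val + v.2.val) := by tauto
    exact (deg_eq_core hm hn hm4 hn4 hA hv hu (fun x h1 h2 => hG x h2 h1)).symm

lemma four_ite_pos_elim {c1 c2 c3 c4 : Prop}
    [Decidable c1] [Decidable c2] [Decidable c3] [Decidable c4] {a1 a2 a3 a4 : ℝ}
    (h : 0 < ite c1 a1 0 + ite c2 a2 0 + ite c3 a3 0 + ite c4 a4 0) :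
    c1 ∨ c2 ∨ c3 ∨ c4 := by
  by_contra hc
  push_neg at hc
  rw [if_neg hc.1, if_neg hc.2.1, if_neg hc.2.2.1, if_neg hc.2.2.2] at h
  norm_num at h

lemma zero_add_ite_pos_elim {c : Prop} [Decidable c] {a : ℝ}
    (h : 0 < (0 : ℝ) + ite c a 0) : c := by
  by_contra hc
  rw [if_neg hc] at h
  norm_num at h

lemma good_step (hm : Even m) (hn : Even n) (hm4 : 4 ≤ m) (hn4 : 4 ≤ n)
    {st tt : WormState m n} (hG : GoodSt st) (hpos : 0 < Pinf m n st tt) :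
    GoodSt tt := by
  obtain ⟨⟨A, u, v⟩, h⟩ := st
  obtain ⟨⟨B, p, q⟩, h'⟩ := tt
  unfold GoodSt at hG ⊢
  dsimp only at hG ⊢
  unfold Pinf at hpos
  dsimp only at hpos
  by_cases huv : u = v
  · rw [if_pos huv] at hpos
    subst huv
    by_cases heq : (⟨(B, p, q), h'⟩ : WormState m n) = ⟨(A, u, u), h⟩
    · have hcomps : B = A ∧ p = u ∧ q = u := by
        have := congrArg Subtype.val heq
        simp only [Prod.mk.injEq] at this
        tauto
      obtain ⟨rfl, rfl, rfl⟩ := hcomps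
      exact hG
    · rw [if_neg heq] at hpos
      obtain ⟨v', hadj, hnot, hBeq, horient⟩ := zero_add_ite_pos_elim hpos
      have hne : u ≠ v' := honeyAdj_ne hm4 hn4 hadj
      subst hBeq
      rcases horient with ⟨rfl, rfl⟩ | ⟨rfl, rfl⟩
      · refine ⟨fun x hxv' hxu => ?_, fun hd => absurd hd (fun hc => hne hc.symm)⟩
        rw [bdeg_insert hnot x,
          if_neg (by rw [Sym2.mem_iff]; push_neg; exact ⟨hxu, hxv'⟩)]
        rw [hG.1 x hxu hxu]
      · refine ⟨fun x hxu hxv' => ?_, fun hd => absurd hd hne⟩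
        rw [bdeg_insert hnot x,
          if_neg (by rw [Sym2.mem_iff]; push_neg; exact ⟨hxu, hxv'⟩)]
        rw [hG.1 x hxu hxu]
  · rw [if_neg huv] at hpos
    have hodd_u : Odd (bdeg m n A u) := (h.2 u).mpr ⟨Or.inl rfl, huv⟩
    have hodd_v : Odd (bdeg m n A v) := (h.2 v).mpr ⟨Or.inr rfl, huv⟩
    rcases four_ite_pos_elim hpos with hc | hc | hc | hc
    · -- head removes an edge
      obtain ⟨hdeg, w, hadj, hmem, hBeq, rfl, rfl⟩ := hc
      subst hBeq
      constructor
      · intro x hxp hxv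
        have e1 := bdeg_erase hmem x
        by_cases hxu : x = u
        · subst hxu
          rw [if_pos (Sym2.mem_mk_left _ _)] at e1
          omega
        · rw [if_neg (by rw [Sym2.mem_iff]; push_neg; exact ⟨hxu, hxp⟩),
            hG.1 x hxu hxv] at e1
          omega
      · intro hd
        subst hd
        have hBdeg : bdeg m n A u = bdeg m n A p :=
          good_adj_deg_eq hm hn hm4 hn4 h.1 hadj hG.1
        have e1 := bdeg_erase hmem p
        rw [if_pos (Sym2.mem_mk_right _ _)] at e1
        omega
    · -- head adds an edge
      obtain ⟨hdeg, w, hadj, hnot, hBeq, rfl, rfl⟩ := hc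
      subst hBeq
      constructor
      · intro x hxp hxv
        have e1 := bdeg_insert hnot x
        by_cases hxu : x = u
        · subst hxu
          rw [if_pos (Sym2.mem_mk_left _ _)] at e1
          omega
        · rw [if_neg (by rw [Sym2.mem_iff]; push_neg; exact ⟨hxu, hxp⟩),
            hG.1 x hxu hxv] at e1
          omega
      · intro hd
        subst hd
        have hBdeg : bdeg m n A u = bdeg m n A p :=
          good_adj_deg_eq hm hn hm4 hn4 h.1 hadj hG.1
        have e1 := bdeg_insert hnot p
        rw [if_pos (Sym2.mem_mk_right _ _)] at e1
        omega
    · -- tail removes an edge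
      obtain ⟨hdeg, w, hadj, hmem, hBeq, rfl, rfl⟩ := hc
      subst hBeq
      constructor
      · intro x hxp hxw
        have e1 := bdeg_erase hmem x
        by_cases hxv : x = v
        · subst hxv
          rw [if_pos (Sym2.mem_mk_left _ _)] at e1
          omega
        · rw [if_neg (by rw [Sym2.mem_iff]; push_neg; exact ⟨hxv, hxw⟩),
            hG.1 x hxp hxv] at e1
          omega
      · intro hd
        subst hd
        have hBdeg : bdeg m n A v = bdeg m n A p :=
          good_adj_deg_eq hm hn hm4 hn4 h.1 hadj (fun x h1 h2 => hG.1 x h2 h1)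
        have e1 := bdeg_erase hmem p
        rw [if_pos (Sym2.mem_mk_right _ _)] at e1
        omega
    · -- tail adds an edge
      obtain ⟨hdeg, w, hadj, hnot, hBeq, rfl, rfl⟩ := hc
      subst hBeq
      constructor
      · intro x hxp hxw
        have e1 := bdeg_insert hnot x
        by_cases hxv : x = v
        · subst hxv
          rw [if_pos (Sym2.mem_mk_left _ _)] at e1
          omega
        · rw [if_neg (by rw [Sym2.mem_iff]; push_neg; exact ⟨hxv, hxw⟩),
            hG.1 x hxp hxv] at e1
          omega
      · intro hd
        subst hd
        have hBdeg : bdeg m n A v = bdeg m n A p :=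
          good_adj_deg_eq hm hn hm4 hn4 h.1 hadj (fun x h1 h2 => hG.1 x h2 h1)
        have e1 := bdeg_insert hnot p
        rw [if_pos (Sym2.mem_mk_right _ _)] at e1
        omega

lemma good_pow (hm : Even m) (hn : Even n) (hm4 : 4 ≤ m) (hn4 : 4 ≤ n) :
    ∀ (k : ℕ) (s t : WormState m n), GoodSt s → 0 < (Pinf m n ^ k) s t → GoodSt t := by
  intro k
  induction k with
  | zero =>
    intro s t hGs hpos
    by_cases hst : s = t
    · subst hst; exact hGs
    · rw [pow_zero, Matrix.one_apply_ne hst] at hpos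
      norm_num at hpos
  | succ k ih =>
    intro s t hGs hpos
    rw [pow_succ, Matrix.mul_apply] at hpos
    have hex : ∃ r, 0 < (Pinf m n ^ k) s r * Pinf m n r t := by
      by_contra hcon
      push_neg at hcon
      have := Finset.sum_nonpos fun r (_ : r ∈ Finset.univ) => hcon r
      linarith
    obtain ⟨r, hr⟩ := hex
    have h1 : 0 < (Pinf m n ^ k) s r := by
      rcases lt_or_eq_of_le (pinf_pow_nonneg k s r) with hlt | heq
      · exact hlt
      · rw [← heq] at hr; nlinarith
    have h2 : 0 < Pinf m n r t := by
      nlinarith [pinf_pow_nonneg k s r, pinf_nonneg r t]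
    exact good_step hm hn hm4 hn4 (ih s r hGs h1) h2

lemma good_reaches (hm : Even m) (hn : Even n) (hm4 : 4 ≤ m) (hn4 : 4 ≤ n)
    {s t : WormState m n} (hGs : GoodSt s) (h : Reaches m n s t) : GoodSt t := by
  obtain ⟨k, hk⟩ := h
  exact good_pow hm hn hm4 hn4 k s t hGs hk
end Main

theorem transience_prop (m n : ℕ) [NeZero m] [NeZero n]
    (hm : Even m) (hn : Even n) (hm4 : 4 ≤ m) (hn4 : 4 ≤ n) :
    (∀ st : WormState m n, ∃ tt : WormState m n,
        tt.1.1 = Hconfig m n ∧ (∃ w : Vtx m n, tt.1.2 = (w, w)) ∧ Reaches m n st tt) ∧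
    (∀ st : WormState m n, ¬ FullSupport m n st →
        ∃ tt : WormState m n, FullSupport m n tt ∧ Reaches m n st tt ∧ ¬ Reaches m n tt st) := by
  constructor
  · intro st
    obtain ⟨w, hw, hr⟩ := part1 hm hn hm4 hn4 st
    exact ⟨⟨(Hconfig m n, w, w), hw⟩, rfl, ⟨w, rfl⟩, hr⟩
  · intro st hns
    obtain ⟨w, hw, hr⟩ := part1 hm hn hm4 hn4 st
    refine ⟨⟨(Hconfig m n, w, w), hw⟩, ?_, hr, ?_⟩
    · intro x
      show bdeg m n (Hconfig m n) x ≠ 0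
      rw [bdeg_Hconfig hm hn hm4 hn4 x]
      norm_num
    · intro hreach
      have hGoodH : GoodSt (⟨(Hconfig m n, w, w), hw⟩ : WormState m n) := by
        constructor
        · intro x _ _
          exact bdeg_Hconfig hm hn hm4 hn4 x
        · intro _
          exact bdeg_Hconfig hm hn hm4 hn4 _
      have hGood := good_reaches hm hn hm4 hn4 hGoodH hreach
      apply hns
      intro x
      by_cases hd : st.1.2.1 = st.1.2.2
      · by_cases hx1 : x = st.1.2.1
        · rw [hx1, hGood.2 hd]; norm_num
        · by_cases hx2 : x = st.1.2.2
          · rw [hx2, ← hd, hGood.2 hd]; norm_num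
          · rw [hGood.1 x hx1 hx2]; norm_num
      · by_cases hx1 : x = st.1.2.1
        · have hodd := (st.2.2 x).mpr ⟨Or.inl hx1, hd⟩
          rcases hodd with ⟨c, hc⟩
          omega
        · by_cases hx2 : x = st.1.2.2
          · have hodd := (st.2.2 x).mpr ⟨Or.inr hx2, hd⟩
            rcases hodd with ⟨c, hc⟩
            omega
          · rw [hGood.1 x hx1 hx2]; norm_num

end FPL
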